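/- Let {a_ξ : ξ < ω_1} be a tower on ω generating an ideal I (together with finite sets). Then there exist sets b_α ⊆ a_α for α < ω_1 such that b_β ∩ a_α =_* b_α whenever α < β, but there is no b ⊆ ω with b ∩ a_α =_* b_α for all α < ω_1. Consequently, taking G_n = ℤ_2 for all n, lim^1 G_I ≠ 0 (a Hausdorff-gap-type nontrivial coherent family exists in ZFC). -/

import Mathlib

/-- The index set `ω₁`: ordinals below `ω₁ = (ℵ₁).ord`. -/
def Omega1 : Type 1 := ↥(Set.Iio (Cardinal.aleph 1).ord)

noncomputable instance : LinearOrder Omega1 :=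
  inferInstanceAs (LinearOrder ↥(Set.Iio (Cardinal.aleph 1).ord))

namespace HGap

def toO (x : Omega1) : Ordinal := Subtype.val (show ↥(Set.Iio (Cardinal.aleph 1).ord) from x)

lemma toO_lt_omega1 (x : Omega1) : toO x < (Cardinal.aleph 1).ord :=
  (show ↥(Set.Iio (Cardinal.aleph 1).ord) from x).2

lemma toO_lt_toO {x y : Omega1} : x < y ↔ toO x < toO y := Iff.rfl

instance : WellFoundedLT Omega1 :=
  (show StrictMono toO from fun _ _ h => toO_lt_toO.mp h).wellFoundedLT

lemma omega1_uncountable : ¬ Countable Omega1 := by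
  intro h
  have e := Ordinal.ToType.mk (o := (Cardinal.aleph 1).ord)
  have h2 : Countable ((Cardinal.aleph 1).ord.ToType) := by
    have h' : Countable ↥(Set.Iio (Cardinal.aleph 1).ord) := h
    exact Countable.of_equiv _ e.toEquiv
  have h3 : Cardinal.mk ((Cardinal.aleph 1).ord.ToType) ≤ Cardinal.aleph0 := Cardinal.mk_le_aleph0_iff.mpr h2
  rw [Cardinal.mk_toType, Cardinal.card_ord] at h3
  exact absurd h3 (not_le.mpr Cardinal.aleph0_lt_aleph_one)

lemma countable_Iio_omega1 (α : Omega1) : Countable ↥(Set.Iio α) := by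
  have hcard : Countable ((toO α).ToType) := by
    rw [← Cardinal.mk_le_aleph0_iff, Cardinal.mk_toType]
    have h := Cardinal.lt_ord.mp (toO_lt_omega1 α)
    rwa [← Cardinal.succ_aleph0, Order.lt_succ_iff] at h
  have h2 : Countable ↥(Set.Iio (toO α)) :=
    Countable.of_equiv _ (Ordinal.ToType.mk (o := toO α)).symm.toEquiv
  have : Function.Injective (fun x : ↥(Set.Iio α) => (⟨toO x.1, toO_lt_toO.mp x.2⟩ : ↥(Set.Iio (toO α)))) := by
    intro x y hxy
    have h1 := Subtype.mk_eq_mk.mp hxy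
    exact Subtype.ext (Subtype.ext h1)
  exact this.countable

lemma fin_bdd {s : Set ℕ} (hs : s.Finite) : ∃ N, ∀ x ∈ s, x < N := by
  rcases hs.bddAbove with ⟨N, hN⟩
  exact ⟨N + 1, fun x hx => Nat.lt_succ_of_le (hN hx)⟩

lemma inf_pick {s t : Set ℕ} (hs : s.Infinite) (ht : t.Finite) (k : ℕ) :
    ∃ x, x ∈ s ∧ x ∉ t ∧ k ≤ x := by
  rcases (hs.diff ht).exists_gt k with ⟨x, hx, hk⟩
  exact ⟨x, hx.1, hx.2, hk.le⟩

/-- The inductive property maintained at every stage of the construction. -/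
def StepProp (a f : Omega1 → Set ℕ) (α : Omega1) (s : Set ℕ) : Prop :=
  s ⊆ a α ∧ s.Infinite ∧ (∀ η, η < α → (s \ a η).Infinite) ∧
  (∀ ξ, ξ < α → (symmDiff (s ∩ a ξ) (f ξ)).Finite) ∧
  (∀ n : ℕ, {ξ : Omega1 | ξ < α ∧ (f ξ ∩ a α) \ s ⊆ Set.Iio n}.Finite)

lemma stepProp_congr {a f g : Omega1 → Set ℕ} {α : Omega1} {s : Set ℕ}
    (h : ∀ ξ, ξ < α → f ξ = g ξ) : StepProp a f α s ↔ StepProp a g α s := by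
  unfold StepProp
  constructor <;> rintro ⟨h1, h2, h3, h4, h5⟩ <;>
    refine ⟨h1, h2, h3, fun ξ hξ => ?_, fun n => ?_⟩
  · rw [← h ξ hξ]; exact h4 ξ hξ
  · convert h5 n using 2
    funext ξ
    by_cases hξ : ξ < α
    · rw [h ξ hξ]
    · simp [hξ]
  · rw [h ξ hξ]; exact h4 ξ hξ
  · convert h5 n using 2
    funext ξ
    by_cases hξ : ξ < α
    · rw [h ξ hξ]
    · simp [hξ]

lemma ext_lemma (a : Omega1 → Set ℕ) (hinf : ∀ ξ, (a ξ).Infinite)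
    (htower : ∀ ξ η : Omega1, ξ < η → (a ξ \ a η).Finite ∧ (a η \ a ξ).Infinite)
    (f : Omega1 → Set ℕ) (α : Omega1)
    (ih : ∀ β, β < α → StepProp a f β (f β)) :
    ∃ s, StepProp a f α s := by
  classical
  by_cases hne : ∃ β, β < α
  case neg =>
    push_neg at hne
    refine ⟨a α, Set.Subset.rfl, hinf α, fun η hη => absurd hη (hne η).not_gt,
      fun ξ hξ => absurd hξ (hne ξ).not_gt, fun n => ?_⟩
    refine Set.finite_empty.subset ?_
    rintro ξ ⟨hξ, -⟩
    exact absurd hξ (hne ξ).not_gt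
  -- nontrivial case
  obtain ⟨β₀, hβ₀⟩ := hne
  have hfsub : ∀ ξ, ξ < α → f ξ ⊆ a ξ := fun ξ h => (ih ξ h).1
  have hfinf : ∀ ξ, ξ < α → (f ξ).Infinite := fun ξ h => (ih ξ h).2.1
  have hF : ∀ ξ, ξ < α → ∀ η, η < ξ → (f ξ \ a η).Infinite := fun ξ h => (ih ξ h).2.2.1
  have hC : ∀ ξ, ξ < α → ∀ η, η < ξ → (symmDiff (f ξ ∩ a η) (f η)).Finite :=
    fun ξ h => (ih ξ h).2.2.2.1
  have hH : ∀ ξ, ξ < α → ∀ n : ℕ,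
      {η : Omega1 | η < ξ ∧ (f η ∩ a ξ) \ f ξ ⊆ Set.Iio n}.Finite :=
    fun ξ h => (ih ξ h).2.2.2.2
  have hafin : ∀ ξ η : Omega1, ξ ≤ η → (a ξ \ a η).Finite := by
    intro ξ η h
    rcases h.lt_or_eq with h | rfl
    · exact (htower ξ η h).1
    · simp
  have hsub : ∀ ξ η : Omega1, ξ ≤ η → η < α → (f ξ \ f η).Finite := by
    intro ξ η hle hη
    rcases hle.lt_or_eq with h | rfl
    · refine (hC η hη ξ h).subset ?_
      intro x hx
      rw [Set.mem_symmDiff]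
      exact Or.inr ⟨hx.1, fun hm => hx.2 hm.1⟩
    · simp
  have hsup : ∀ ξ η : Omega1, ξ ≤ η → η < α → ((f η ∩ a ξ) \ f ξ).Finite := by
    intro ξ η hle hη
    rcases hle.lt_or_eq with h | rfl
    · refine (hC η hη ξ h).subset ?_
      intro x hx
      rw [Set.mem_symmDiff]
      exact Or.inl ⟨hx.1, hx.2⟩
    · refine Set.finite_empty.subset ?_
      rintro x ⟨⟨h1, -⟩, h2⟩
      exact absurd h1 h2
  -- enumeration of Iio α
  haveI : Countable ↥(Set.Iio α) := countable_Iio_omega1 α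
  haveI : Nonempty ↥(Set.Iio α) := ⟨⟨β₀, hβ₀⟩⟩
  obtain ⟨g, hg⟩ := exists_surjective_nat ↥(Set.Iio α)
  -- the "ladder" γ
  let γ : ℕ → Omega1 := fun k => Nat.rec (g 0).1 (fun k gk => max gk (g (k + 1)).1) k
  have γs : ∀ k, γ (k + 1) = max (γ k) (g (k + 1)).1 := fun _ => rfl
  have hγα : ∀ k, γ k < α := by
    intro k
    induction k with
    | zero => exact (g 0).2
    | succ k ihk => rw [γs]; exact max_lt ihk (g (k + 1)).2
  have hγmono : Monotone γ := monotone_nat_of_le_succ (fun k => by rw [γs]; exact le_max_left _ _)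
  have hgle : ∀ k, (g k).1 ≤ γ k := by
    intro k
    cases k with
    | zero => exact le_rfl
    | succ k => rw [γs]; exact le_max_right _ _
  have hγcof : ∀ ξ, ξ < α → ∃ k, ξ ≤ γ k := by
    intro ξ hξ
    obtain ⟨k, hk⟩ := hg ⟨ξ, hξ⟩
    refine ⟨k, ?_⟩
    have h1 : (g k).1 = ξ := by rw [hk]
    rw [← h1]
    exact hgle k
  -- the fresh diagonal set e
  have hy : ∀ k : ℕ, ∃ x, x ∈ a α ∧ (∀ j, j ≤ k → x ∉ a (γ j)) ∧ k ≤ x := by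
    intro k
    have hbig : (a α \ a (γ k)).Infinite := (htower _ _ (hγα k)).2
    have hfin : (⋃ j ∈ Finset.range (k + 1), (a (γ j) \ a (γ k))).Finite :=
      Set.Finite.biUnion (Finset.range (k + 1)).finite_toSet
        (fun j hj => hafin (γ j) (γ k) (hγmono (Nat.lt_succ_iff.mp (Finset.mem_range.mp hj))))
    obtain ⟨x, hx1, hx2, hx3⟩ := inf_pick hbig hfin k
    refine ⟨x, hx1.1, fun j hj hmem => hx2 ?_, hx3⟩
    exact Set.mem_biUnion (Finset.mem_range.mpr (Nat.lt_succ_of_le hj)) ⟨hmem, hx1.2⟩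
  choose y hy1 hy2 hy3 using hy
  set e : Set ℕ := Set.range y with he
  have heinf : e.Infinite := by
    apply Set.infinite_of_not_bddAbove
    rintro ⟨N, hN⟩
    have := hN ⟨N + 1, rfl⟩
    have := hy3 (N + 1)
    omega
  have hea : ∀ η, η < α → (e ∩ a η).Finite := by
    intro η hη
    obtain ⟨k₀, hk₀⟩ := hγcof η hη
    have hss : e ∩ a η ⊆ (y '' Set.Iio (k₀ + 1)) ∪ (a η \ a (γ k₀)) := by
      rintro x ⟨⟨k, rfl⟩, hx⟩
      by_cases hk : k < k₀ + 1
      · exact Or.inl ⟨k, hk, rfl⟩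
      · exact Or.inr ⟨hx, fun hmem => hy2 k k₀ (by omega) hmem⟩
    exact (((Set.finite_Iio _).image y).union (hafin η (γ k₀) hk₀)).subset hss
  have heF : ∀ η, η < α → (e \ a η).Infinite := by
    intro η hη
    refine (heinf.diff (hea η hη)).mono ?_
    rintro x ⟨hx1, hx2⟩
    exact ⟨hx1, fun h => hx2 ⟨hx1, h⟩⟩
  -- the finite "error" sets and their bounds
  set Ebig : ℕ → Set ℕ := fun k =>
    (⋃ i ∈ Finset.range (k + 2), (f (γ i) \ f (γ (k + 1)))) ∪
      ((a (γ (k + 1)) \ a α) ∪ (e ∩ a (γ (k + 1)))) with hEbigdef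
  have hEbig : ∀ k, (Ebig k).Finite := by
    intro k
    refine Set.Finite.union (Set.Finite.biUnion (Finset.range (k + 2)).finite_toSet
      (fun i hi => hsub (γ i) (γ (k + 1))
        (hγmono (Nat.lt_succ_iff.mp (Finset.mem_range.mp hi))) (hγα (k + 1))))
      (Set.Finite.union (hafin _ _ (hγα (k + 1)).le) (hea _ (hγα (k + 1))))
  choose Bnd hBnd using fun k => fin_bdd (hEbig k)
  set M : ℕ → ℕ → ℕ := fun k n => max n (Bnd k) with hMdef
  -- the potential-bad sets
  set P : ℕ → ℕ → Set Omega1 := fun k n =>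
    {ξ | ξ ≤ γ (k + 1) ∧ (f ξ ∩ a (γ (k + 1))) \ f (γ (k + 1)) ⊆ Set.Iio (M k n)} with hPdef
  have hPfin : ∀ k n, (P k n).Finite := by
    intro k n
    have hss : P k n ⊆ insert (γ (k + 1))
        {ξ : Omega1 | ξ < γ (k + 1) ∧ (f ξ ∩ a (γ (k + 1))) \ f (γ (k + 1)) ⊆ Set.Iio (M k n)} := by
      rintro ξ ⟨hle, hs⟩
      rcases hle.lt_or_eq with h | h
      · exact Set.mem_insert_of_mem _ ⟨h, hs⟩
      · rw [h]; exact Set.mem_insert _ _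
    exact ((hH (γ (k + 1)) (hγα (k + 1)) (M k n)).insert _).subset hss
  -- witnesses
  have hwit : ∀ k : ℕ, ∀ ξ : Omega1, ∃ w : ℕ,
      ξ < α → (∀ j, j < k → γ j < ξ) →
      (w ∈ f ξ ∧ w ∈ a α ∧ w ∉ e ∧ (∀ j, j < k → w ∉ a (γ j)) ∧ k ≤ w) := by
    intro k ξ
    rcases Classical.em (ξ < α ∧ ∀ j, j < k → γ j < ξ) with hξ | hξ
    · obtain ⟨hξα, hγξ⟩ := hξ
      have hsrc : (f ξ \ ⋃ j ∈ Finset.range k, a (γ j)).Infinite := by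
        rcases Nat.eq_zero_or_pos k with hk | hk
        · subst hk
          simpa using hfinf ξ hξα
        · have h1 : (f ξ \ a (γ (k - 1))).Infinite := hF ξ hξα (γ (k - 1)) (hγξ _ (by omega))
          have h2 : (⋃ j ∈ Finset.range k, (a (γ j) \ a (γ (k - 1)))).Finite :=
            Set.Finite.biUnion (Finset.range k).finite_toSet
              (fun j hj => hafin (γ j) (γ (k - 1))
                (hγmono (by have := Finset.mem_range.mp hj; omega)))
          refine (h1.diff h2).mono ?_
          rintro x ⟨⟨hx1, hx2⟩, hx3⟩
          refine ⟨hx1, fun hmem => ?_⟩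
          obtain ⟨j, hj, hmem⟩ := Set.mem_iUnion₂.mp hmem
          exact hx3 (Set.mem_biUnion hj ⟨hmem, hx2⟩)
      have hfin2 : ((f ξ \ a α) ∪ (e ∩ a ξ)).Finite := by
        refine Set.Finite.union (((hafin ξ α hξα.le)).subset ?_) (hea ξ hξα)
        intro x hx
        exact ⟨hfsub ξ hξα hx.1, hx.2⟩
      obtain ⟨w, hw1, hw2, hw3⟩ := inf_pick hsrc hfin2 k
      refine ⟨w, fun _ _ => ⟨hw1.1, ?_, ?_, ?_, hw3⟩⟩
      · by_contra hwa
        exact hw2 (Or.inl ⟨hw1.1, hwa⟩)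
      · intro hwe
        exact hw2 (Or.inr ⟨hwe, hfsub ξ hξα hw1.1⟩)
      · intro j hj hmem
        exact hw1.2 (Set.mem_biUnion (Finset.mem_range.mpr hj) hmem)
    · exact ⟨0, fun h1 h2 => absurd ⟨h1, h2⟩ hξ⟩
  choose w hw using hwit
  -- bounds for the cut-offs m k
  have hCfin : ∀ k, (⋃ j ∈ Finset.range k, ((f (γ k) ∩ a (γ j)) \ f (γ j))).Finite := by
    intro k
    refine Set.Finite.biUnion (Finset.range k).finite_toSet (fun j hj =>
      hsup (γ j) (γ k) (hγmono (Finset.mem_range.mp hj).le) (hγα k))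
  have hWex : ∀ k, ∃ N, (∀ x ∈ ⋃ j ∈ Finset.range k, ((f (γ k) ∩ a (γ j)) \ f (γ j)), x < N) ∧
      (∀ ξ ∈ P k k, w k ξ < N) := by
    intro k
    obtain ⟨N1, hN1⟩ := fin_bdd (hCfin k)
    obtain ⟨N2, hN2⟩ := fin_bdd ((hPfin k k).image (w k))
    refine ⟨max N1 N2, fun x hx => lt_of_lt_of_le (hN1 x hx) (le_max_left _ _),
      fun ξ hξ => lt_of_lt_of_le (hN2 _ (Set.mem_image_of_mem _ hξ)) (le_max_right _ _)⟩
  choose NB hNB1 hNB2 using hWex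
  set m : ℕ → ℕ := fun k => Nat.rec (NB 0) (fun k mk => max (mk + 1) (NB (k + 1))) k with hmdef
  have hms : ∀ k, m (k + 1) = max (m k + 1) (NB (k + 1)) := fun _ => rfl
  have hmN : ∀ k, NB k ≤ m k := by
    intro k
    cases k with
    | zero => exact le_rfl
    | succ k => rw [hms]; exact le_max_right _ _
  have hmmono : Monotone m := monotone_nat_of_le_succ (fun k => by
    rw [hms]; exact le_trans (Nat.le_succ _) (le_max_left _ _))
  have R2 : ∀ k j, j < k → ∀ x, x ∈ f (γ k) → x ∈ a (γ j) → m k ≤ x → x ∈ f (γ j) := by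
    intro k j hjk x hx1 hx2 hx3
    by_contra hx4
    have : x ∈ ⋃ j ∈ Finset.range k, ((f (γ k) ∩ a (γ j)) \ f (γ j)) :=
      Set.mem_biUnion (Finset.mem_range.mpr hjk) ⟨⟨hx1, hx2⟩, hx4⟩
    have := hNB1 k x this
    have := hmN k
    omega
  have R3 : ∀ k ξ, ξ ∈ P k k → w k ξ < m k := by
    intro k ξ hξ
    exact lt_of_lt_of_le (hNB2 k ξ hξ) (hmN k)
  -- the new set s
  set s : Set ℕ := e ∪ ⋃ k : ℕ, ((f (γ k) ∩ a α) \ Set.Iio (m k)) with hsdef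
  have hmem_s_of : ∀ k x, x ∈ f (γ k) → x ∈ a α → m k ≤ x → x ∈ s := by
    intro k x h1 h2 h3
    exact Or.inr (Set.mem_iUnion.mpr ⟨k, ⟨⟨h1, h2⟩, by simpa using h3⟩⟩)
  have hs_sub : s ⊆ a α := by
    rintro x (hx | hx)
    · obtain ⟨k, rfl⟩ := hx
      exact hy1 k
    · obtain ⟨k, hk⟩ := Set.mem_iUnion.mp hx
      exact hk.1.2
  refine ⟨s, hs_sub, heinf.mono Set.subset_union_left, ?_, ?_, ?_⟩
  · -- freshness
    intro η hη
    refine (heF η hη).mono ?_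
    rintro x ⟨hx1, hx2⟩
    exact ⟨Or.inl hx1, hx2⟩
  · -- coherence
    intro ξ hξ
    obtain ⟨k₀, hk₀⟩ := hγcof ξ hξ
    have pairfin : ∀ k, ((f (γ k) ∩ a ξ) \ f ξ).Finite := by
      intro k
      rcases le_total ξ (γ k) with h | h
      · exact hsup ξ (γ k) h (hγα k)
      · exact (hsub (γ k) ξ h hξ).subset (fun x hx => ⟨hx.1.1, hx.2⟩)
    rw [Set.symmDiff_def]
    refine Set.Finite.union ?_ ?_
    · -- (s ∩ a ξ) \ f ξ is finite
      have hss : (s ∩ a ξ) \ f ξ ⊆ (e ∩ a ξ) ∪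
          ((⋃ k ∈ Finset.range (k₀ + 1), ((f (γ k) ∩ a ξ) \ f ξ)) ∪
           (((f (γ k₀) ∩ a ξ) \ f ξ) ∪ (a ξ \ a (γ k₀)))) := by
        rintro x ⟨⟨hxs, hxa⟩, hxf⟩
        rcases hxs with hxe | hxu
        · exact Or.inl ⟨hxe, hxa⟩
        · obtain ⟨k, hk⟩ := Set.mem_iUnion.mp hxu
          have hmk : m k ≤ x := by simpa using hk.2
          by_cases hkk : k ≤ k₀
          · exact Or.inr (Or.inl (Set.mem_biUnion (Finset.mem_range.mpr (by omega))
              ⟨⟨hk.1.1, hxa⟩, hxf⟩))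
          · by_cases hxg : x ∈ a (γ k₀)
            · have hxf0 : x ∈ f (γ k₀) := R2 k k₀ (by omega) x hk.1.1 hxg hmk
              exact Or.inr (Or.inr (Or.inl ⟨⟨hxf0, hxa⟩, hxf⟩))
            · exact Or.inr (Or.inr (Or.inr ⟨hxa, hxg⟩))
      refine ((hea ξ hξ).union ((Set.Finite.biUnion (Finset.range (k₀ + 1)).finite_toSet
        (fun k _ => pairfin k)).union ((pairfin k₀).union (hafin ξ (γ k₀) hk₀)))).subset hss
    · -- f ξ \ (s ∩ a ξ) is finite
      have hss : f ξ \ (s ∩ a ξ) ⊆ Set.Iio (m k₀) ∪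
          ((f ξ \ f (γ k₀)) ∪ (f ξ \ a α)) := by
        rintro x ⟨hxf, hxs⟩
        by_cases h1 : x < m k₀
        · exact Or.inl h1
        by_cases h2 : x ∈ f (γ k₀)
        · by_cases h3 : x ∈ a α
          · exact absurd ⟨hmem_s_of k₀ x h2 h3 (by omega), hfsub ξ hξ hxf⟩ hxs
          · exact Or.inr (Or.inr ⟨hxf, h3⟩)
        · exact Or.inr (Or.inl ⟨hxf, h2⟩)
      refine ((Set.finite_Iio _).union ((hsub ξ (γ k₀) hk₀ (hγα k₀)).union
        ((hafin ξ α hξ.le).subset (fun x hx => ⟨hfsub ξ hξ hx.1, hx.2⟩)))).subset hss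
  · -- the Hausdorff condition at α
    intro n
    have key : {ξ : Omega1 | ξ < α ∧ (f ξ ∩ a α) \ s ⊆ Set.Iio n} ⊆
        ⋃ k ∈ Finset.range n, P k n := by
      intro ξ hξmem
      obtain ⟨hξα, hbad⟩ := hξmem
      have hex : ∃ k, ξ ≤ γ (k + 1) := by
        obtain ⟨k, hk⟩ := hγcof ξ hξα
        exact ⟨k, hk.trans (hγmono (Nat.le_succ k))⟩
      set k := Nat.find hex with hkdef
      have hk1 : ξ ≤ γ (k + 1) := Nat.find_spec hex
      have hγlt : ∀ j, j < k → γ j < ξ := by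
        intro j hj
        have h1 : ¬ ξ ≤ γ (j + 1) := Nat.find_min hex hj
        have h2 : γ (j + 1) < ξ := lt_of_not_ge h1
        exact lt_of_le_of_lt (hγmono (Nat.le_succ j)) h2
      have hPA : ξ ∈ P k n := by
        refine ⟨hk1, ?_⟩
        rintro x ⟨⟨hxf, hxa1⟩, hxnf⟩
        refine Set.mem_Iio.mpr ?_
        have hEb : x ∈ Ebig k → x < M k n :=
          fun hx => lt_of_lt_of_le (hBnd k x hx) (le_max_right _ _)
        by_cases hxα : x ∈ a α
        · by_cases hxs : x ∈ s
          · rcases hxs with hxe | hxu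
            · exact hEb (Or.inr (Or.inr ⟨hxe, hxa1⟩))
            · obtain ⟨i, hi⟩ := Set.mem_iUnion.mp hxu
              have hmi : m i ≤ x := by simpa using hi.2
              by_cases hik : i ≤ k + 1
              · refine hEb (Or.inl (Set.mem_biUnion (Finset.mem_range.mpr (by omega))
                  ⟨hi.1.1, hxnf⟩))
              · exact absurd (R2 i (k + 1) (by omega) x hi.1.1 hxa1 hmi) hxnf
          · exact lt_of_lt_of_le (Set.mem_Iio.mp (hbad ⟨⟨hxf, hxα⟩, hxs⟩)) (le_max_left _ _)
        · exact hEb (Or.inr (Or.inl ⟨hxa1, hxα⟩))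
      by_cases hkn : k < n
      · exact Set.mem_biUnion (Finset.mem_range.mpr hkn) hPA
      · exfalso
        push_neg at hkn
        have hPk : ξ ∈ P k k := by
          exact ⟨hk1, fun x hx => Set.mem_Iio.mpr
            (lt_of_lt_of_le (Set.mem_Iio.mp (hPA.2 hx)) (max_le_max hkn le_rfl))⟩
        obtain ⟨hw1, hw2, hw3, hw4, hw5⟩ := hw k ξ hξα hγlt
        have hws : w k ξ ∉ s := by
          rintro (hwe | hwu)
          · exact hw3 hwe
          · obtain ⟨j, hj⟩ := Set.mem_iUnion.mp hwu
            have hmj : m j ≤ w k ξ := by simpa using hj.2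
            by_cases hjk : j < k
            · exact hw4 j hjk (hfsub (γ j) (hγα j) hj.1.1)
            · have hlt : w k ξ < m k := R3 k ξ hPk
              have hle : m k ≤ m j := hmmono (by omega)
              omega
        have := hbad ⟨⟨hw1, hw2⟩, hws⟩
        simp only [Set.mem_Iio] at this
        omega
    exact (((Finset.range n).finite_toSet.biUnion (fun k _ => hPfin k n))).subset key

noncomputable def hgStep (a : Omega1 → Set ℕ) (hinf : ∀ ξ, (a ξ).Infinite)
    (htower : ∀ ξ η : Omega1, ξ < η → (a ξ \ a η).Finite ∧ (a η \ a ξ).Infinite) :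
    ∀ α : Omega1, (∀ β, β < α → Set ℕ) → Set ℕ := fun α ihs =>
  @dite _ (∀ β (_ : β < α),
      StepProp a (fun β' => if h' : β' < α then ihs β' h' else ∅) β
        ((fun β' => if h' : β' < α then ihs β' h' else ∅) β))
    (Classical.propDecidable _)
    (fun h => Classical.choose
      (ext_lemma a hinf htower (fun β' => if h' : β' < α then ihs β' h' else ∅) α h))
    (fun _ => ∅)

noncomputable def hgFam (a : Omega1 → Set ℕ) (hinf : ∀ ξ, (a ξ).Infinite)
    (htower : ∀ ξ η : Omega1, ξ < η → (a ξ \ a η).Finite ∧ (a η \ a ξ).Infinite) :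
    Omega1 → Set ℕ :=
  wellFounded_lt.fix (hgStep a hinf htower)

set_option maxHeartbeats 1000000 in
lemma hgFam_spec (a : Omega1 → Set ℕ) (hinf : ∀ ξ, (a ξ).Infinite)
    (htower : ∀ ξ η : Omega1, ξ < η → (a ξ \ a η).Finite ∧ (a η \ a ξ).Infinite) :
    ∀ α : Omega1, StepProp a (hgFam a hinf htower) α (hgFam a hinf htower α) := by
  set b := hgFam a hinf htower with hbdef
  have hb : ∀ α, b α = hgStep a hinf htower α (fun β _ => b β) := by
    intro α
    rw [hbdef]
    unfold hgFam
    exact WellFounded.fix_eq _ _ _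
  intro α
  refine wellFounded_lt.induction (C := fun α => StepProp a b α (b α)) α ?_
  intro α ihp
  have hcond : ∀ β, β < α →
      StepProp a (fun β' => if h' : β' < α then b β' else ∅) β
        (if h' : β < α then b β else ∅) := by
    intro β hβ
    have h1 : StepProp a b β (b β) := ihp β hβ
    rw [dif_pos hβ]
    exact (stepProp_congr (f := fun β' => if h' : β' < α then b β' else ∅) (g := b)
      (fun ξ hξ => dif_pos (hξ.trans hβ))).mpr h1
  have hbα : b α = Classical.choose
      (ext_lemma a hinf htower (fun β' => if h' : β' < α then b β' else ∅) α hcond) := by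
    rw [hb α]
    unfold hgStep
    beta_reduce
    exact dif_pos hcond
  have hspec := Classical.choose_spec
    (ext_lemma a hinf htower (fun β' => if h' : β' < α then b β' else ∅) α hcond)
  rw [← hbα] at hspec
  exact (stepProp_congr (f := fun β' => if h' : β' < α then b β' else ∅) (g := b)
    (fun ξ hξ => dif_pos hξ)).mp hspec

end HGap

/-!
Statement 12: Let `{a_ξ : ξ < ω₁}` be a tower on `ω` (generating, together with the
finite sets, an ideal `I`).  Then there exist sets `b_α ⊆ a_α` for `α < ω₁` such that
`b_β ∩ a_α =_* b_α` whenever `α < β`, but there is no `b ⊆ ω` with `b ∩ a_α =_* b_α`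
for all `α < ω₁`.  Consequently, taking `G_n = ℤ₂` for all `n`, this coherent
nontrivial family (of indicator functions `f_α : a_α → ℤ₂` of the `b_α`) witnesses
`lim^1 G_I ≠ 0` in ZFC.
-/
theorem exists_hausdorff_gap_family
    (a : Omega1 → Set ℕ)
    (hinf : ∀ ξ, (a ξ).Infinite)
    (htower : ∀ ξ η : Omega1, ξ < η → (a ξ \ a η).Finite ∧ (a η \ a ξ).Infinite) :
    ∃ b : Omega1 → Set ℕ,
      (∀ α, b α ⊆ a α) ∧
      (∀ α β : Omega1, α < β → (symmDiff (b β ∩ a α) (b α)).Finite) ∧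
      ¬ ∃ c : Set ℕ, ∀ α : Omega1, (symmDiff (c ∩ a α) (b α)).Finite := by
  classical
  obtain ⟨b, key⟩ : ∃ b : Omega1 → Set ℕ, ∀ α, HGap.StepProp a b α (b α) :=
    ⟨HGap.hgFam a hinf htower, HGap.hgFam_spec a hinf htower⟩
  refine ⟨b, fun α => (key α).1, fun α β h => (key β).2.2.2.1 α h, ?_⟩
  rintro ⟨c, hc⟩
  choose N hN using fun α : Omega1 => HGap.fin_bdd (hc α)
  rcases Classical.em (∃ α : Omega1, {β : Omega1 | N β = N α ∧ β < α}.Infinite) with hfib | hfib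
  · obtain ⟨α, hα⟩ := hfib
    have hsubs : {β : Omega1 | N β = N α ∧ β < α} ⊆
        {ξ : Omega1 | ξ < α ∧ (b ξ ∩ a α) \ b α ⊆ Set.Iio (N α)} := by
      rintro β ⟨hNβ, hβα⟩
      refine ⟨hβα, ?_⟩
      rintro x ⟨⟨hxb, hxa⟩, hxnb⟩
      refine Set.mem_Iio.mpr ?_
      by_cases hxc : x ∈ c
      · refine hN α x ?_
        rw [Set.mem_symmDiff]
        exact Or.inl ⟨⟨hxc, hxa⟩, hxnb⟩
      · have hx2 : x ∈ symmDiff (c ∩ a β) (b β) := by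
          rw [Set.mem_symmDiff]
          exact Or.inr ⟨hxb, fun hmem => hxc hmem.1⟩
        have h3 := hN β x hx2
        omega
    exact (hα.mono hsubs) ((key α).2.2.2.2 (N α))
  · push_neg at hfib
    have hcount : ∀ n : ℕ, {α : Omega1 | N α = n}.Countable := by
      intro n
      refine Set.countable_iff_exists_injOn.mpr
        ⟨fun α => {β : Omega1 | N β = n ∧ β < α}.ncard, ?_⟩
      have hmono : ∀ x ∈ {α : Omega1 | N α = n}, ∀ y ∈ {α : Omega1 | N α = n}, x < y →
          {β : Omega1 | N β = n ∧ β < x}.ncard < {β : Omega1 | N β = n ∧ β < y}.ncard := by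
        intro x hx y hy hxy
        have hfin : {β : Omega1 | N β = n ∧ β < y}.Finite := by
          have h0 := hfib y
          have hyy : N y = n := hy
          convert h0 using 2
          rw [hyy]
        refine Set.ncard_lt_ncard ?_ hfin
        constructor
        · rintro β ⟨h1, h2⟩
          exact ⟨h1, h2.trans hxy⟩
        · intro hss
          have h4 : x ∈ {β : Omega1 | N β = n ∧ β < x} := hss ⟨hx, hxy⟩
          exact absurd h4.2 (lt_irrefl x)
      exact StrictMonoOn.injOn hmono
    have huniv : (Set.univ : Set Omega1).Countable := by
      have heq : (Set.univ : Set Omega1) = ⋃ n : ℕ, {α : Omega1 | N α = n} := by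
        ext α
        simp only [Set.mem_univ, Set.mem_iUnion, Set.mem_setOf_eq, true_iff]
        exact ⟨N α, rfl⟩
      rw [heq]
      exact Set.countable_iUnion hcount
    exact HGap.omega1_uncountable (Set.countable_univ_iff.mp huniv)
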